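/- Let φ : [0,1] → [0,1] be the tent map φ(x) = 2x for x ∈ [0,1/2) and φ(x) = 2(1−x) for x ∈ [1/2,1]. Then for every x ∈ [0,1], ∑_{n=0}^{∞} (1/2)^n (φ^n(x))² = 2x − x². -/
import Mathlib


noncomputable def tentMap (x : ℝ) : ℝ := if x < 1 / 2 then 2 * x else 2 * (1 - x)

lemma tent_key (y : ℝ) :
    2 * y - y ^ 2 = y ^ 2 + (1 / 2) * (2 * tentMap y - (tentMap y) ^ 2) := by
  unfold tentMap; split <;> ring

lemma tent_mem {y : ℝ} (hy : y ∈ Set.Icc (0 : ℝ) 1) : tentMap y ∈ Set.Icc (0 : ℝ) 1 := by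
  obtain ⟨h0, h1⟩ := hy
  unfold tentMap
  split <;> constructor <;> linarith

lemma tent_iter_mem {x : ℝ} (hx : x ∈ Set.Icc (0 : ℝ) 1) (n : ℕ) :
    tentMap^[n] x ∈ Set.Icc (0 : ℝ) 1 := by
  induction n with
  | zero => simpa using hx
  | succ n ih => rw [Function.iterate_succ_apply']; exact tent_mem ih

theorem tent_half_square_series (x : ℝ) (hx : x ∈ Set.Icc (0 : ℝ) 1) :
    ∑' n : ℕ, (1 / 2 : ℝ) ^ n * (tentMap^[n] x) ^ 2 = 2 * x - x ^ 2 := by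
  set f : ℝ → ℝ := fun y => 2 * y - y ^ 2 with hf
  have hbound : ∀ n : ℕ, |(1 / 2 : ℝ) ^ n * (tentMap^[n] x) ^ 2| ≤ (1 / 2 : ℝ) ^ n := by
    intro n
    obtain ⟨h0, h1⟩ := tent_iter_mem hx n
    have ht2 : (tentMap^[n] x) ^ 2 ≤ 1 := by nlinarith
    rw [abs_of_nonneg (by positivity)]
    calc (1/2:ℝ)^n * (tentMap^[n] x)^2 ≤ (1/2:ℝ)^n * 1 :=
          mul_le_mul_of_nonneg_left ht2 (by positivity)
      _ = (1/2:ℝ)^n := by ring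
  have hsum : Summable fun n : ℕ => (1 / 2 : ℝ) ^ n * (tentMap^[n] x) ^ 2 := by
    refine Summable.of_abs (Summable.of_nonneg_of_le (fun n => abs_nonneg _) hbound ?_)
    exact summable_geometric_of_lt_one (by norm_num) (by norm_num)
  have hpartial : ∀ N : ℕ,
      ∑ n ∈ Finset.range N, (1 / 2 : ℝ) ^ n * (tentMap^[n] x) ^ 2
        = f x - (1 / 2 : ℝ) ^ N * f (tentMap^[N] x) := by
    intro N
    induction N with
    | zero => simp
    | succ N ih =>
        rw [Finset.sum_range_succ, ih, Function.iterate_succ_apply', pow_succ]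
        have hk := tent_key (tentMap^[N] x)
        simp only [hf]
        linear_combination (-(1/2:ℝ)^N) * hk
  have hle : ∀ N : ℕ, ‖(1 / 2 : ℝ) ^ N * f (tentMap^[N] x)‖ ≤ (1 / 2 : ℝ) ^ N := by
    intro N
    obtain ⟨h0, h1⟩ := tent_iter_mem hx N
    have hfb : |f (tentMap^[N] x)| ≤ 1 := by
      rw [abs_le]; constructor <;> simp only [hf] <;> nlinarith
    rw [Real.norm_eq_abs, abs_mul, abs_of_nonneg (by positivity : (0:ℝ) ≤ (1/2:ℝ)^N)]
    calc (1/2:ℝ)^N * |f (tentMap^[N] x)| ≤ (1/2:ℝ)^N * 1 :=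
          mul_le_mul_of_nonneg_left hfb (by positivity)
      _ = (1/2:ℝ)^N := by ring
  have hlim : Filter.Tendsto
      (fun N => ∑ n ∈ Finset.range N, (1 / 2 : ℝ) ^ n * (tentMap^[n] x) ^ 2)
      Filter.atTop (nhds (f x)) := by
    simp only [hpartial]
    have h0 : Filter.Tendsto (fun N : ℕ => (1 / 2 : ℝ) ^ N * f (tentMap^[N] x))
        Filter.atTop (nhds 0) :=
      squeeze_zero_norm hle
        (tendsto_pow_atTop_nhds_zero_of_lt_one (by norm_num) (by norm_num))
    have := Filter.Tendsto.sub (tendsto_const_nhds (x := f x)) h0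
    simpa using this
  exact tendsto_nhds_unique hsum.hasSum.tendsto_sum_nat hlim
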